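/- arXiv:1708.03119 — 4 statements merged into one kernel-verified Lean document; each statement's English description precedes it below -/
import Mathlib

section
/- In the Drinfeld-Kohno Lie algebra t_{n+1}, for any element a in the Lie subalgebra generated by a_1,…,a_n (where a_i = t_{i(n+1)}), the central element c' = Σ_{1≤i<j≤n} t_{ij} of t_n acts on a by [c', a] = [a, a_1 + ⋯ + a_n]. -/
private lemma sum_lie_aux {L : Type*} [LieRing L] {ι : Type*} (s : Finset ι)
    (f : ι → L) (x : L) : ⁅∑ i ∈ s, f i, x⁆ = ∑ i ∈ s, ⁅f i, x⁆ :=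
  map_sum (AddMonoidHom.mk' (fun y => ⁅y, x⁆) (fun a b => add_lie a b x)) f s

private lemma pair_sum_aux {M : Type*} [AddCommMonoid M] {n : ℕ} (k : Fin n)
    (f : Fin n → Fin n → M) (hsymm : ∀ i j, f i j = f j i)
    (hz : ∀ i j, i ≠ j → i ≠ k → j ≠ k → f i j = 0) :
    (∑ p ∈ Finset.univ.filter (fun p : Fin n × Fin n => p.1 < p.2), f p.1 p.2)
      = ∑ j ∈ Finset.univ.erase k, f k j := by
  have hsub : Finset.univ.filter (fun p : Fin n × Fin n => p.1 < p.2 ∧ (p.1 = k ∨ p.2 = k))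
      ⊆ Finset.univ.filter (fun p : Fin n × Fin n => p.1 < p.2) := by
    intro p hp
    simp only [Finset.mem_filter, Finset.mem_univ, true_and] at hp ⊢
    exact hp.1
  rw [← Finset.sum_subset hsub (by
    intro p hp hnp
    simp only [Finset.mem_filter, Finset.mem_univ, true_and] at hp hnp
    push_neg at hnp
    obtain ⟨h1, h2⟩ := hnp hp
    exact hz _ _ (ne_of_lt hp) h1 h2)]
  refine Finset.sum_nbij' (fun p => if p.1 = k then p.2 else p.1)
      (fun j => if j < k then (j, k) else (k, j)) ?_ ?_ ?_ ?_ ?_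
  · rintro ⟨x, y⟩ hp
    simp only [Finset.mem_filter, Finset.mem_univ, true_and] at hp
    simp only [Finset.mem_erase, Finset.mem_univ, and_true]
    obtain ⟨hlt, h1 | h2⟩ := hp
    · subst h1; simp only [if_pos rfl]; exact (ne_of_gt hlt)
    · subst h2
      rw [if_neg (ne_of_lt hlt)]
      exact ne_of_lt hlt
  · intro j hj
    simp only [Finset.mem_erase, Finset.mem_univ, and_true] at hj
    simp only [Finset.mem_filter, Finset.mem_univ, true_and]
    rcases lt_or_gt_of_ne hj with h | h
    · simp [h]
    · simp only [if_neg (not_lt_of_gt h)]; exact ⟨h, by simp⟩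
  · rintro ⟨x, y⟩ hp
    simp only [Finset.mem_filter, Finset.mem_univ, true_and] at hp
    obtain ⟨hlt, h1 | h2⟩ := hp
    · subst h1; simp [not_lt_of_gt hlt]
    · subst h2; simp [ne_of_lt hlt, hlt]
  · intro j hj
    simp only [Finset.mem_erase, Finset.mem_univ, and_true] at hj
    rcases lt_or_gt_of_ne hj with h | h
    · simp [h, ne_of_lt h]
    · simp [not_lt_of_gt h]
  · rintro ⟨x, y⟩ hp
    simp only [Finset.mem_filter, Finset.mem_univ, true_and] at hp
    obtain ⟨hlt, h1 | h2⟩ := hp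
    · subst h1; simp
    · subst h2
      simp only [if_neg (ne_of_lt hlt)]
      exact (hsymm _ _)

/-- In the Drinfeld-Kohno Lie algebra `t_{n+1}`, for any element `a` of the Lie subalgebra
generated by `a_1, …, a_n` (where `a i = t (i.castSucc) (Fin.last n)`), the central element
`c' = ∑_{1 ≤ i < j ≤ n} t i j` of `t_n ⊂ t_{n+1}` acts by
`⁅c', a⁆ = ⁅a, a_1 + ⋯ + a_n⁆`. -/
theorem drinfeld_kohno_c_acts_inner (n : ℕ) (L : Type*) [LieRing L] [LieAlgebra ℂ L]
    (t : Fin (n + 1) → Fin (n + 1) → L)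
    (hsymm : ∀ i j, t i j = t j i)
    (hcomm : ∀ i j k l : Fin (n + 1), i ≠ j → k ≠ l → i ≠ k → i ≠ l → j ≠ k → j ≠ l →
      ⁅t i j, t k l⁆ = 0)
    (hrel : ∀ i j k : Fin (n + 1), i ≠ j → i ≠ k → j ≠ k →
      ⁅t i j + t i k, t j k⁆ = 0) :
    ∀ a ∈ LieSubalgebra.lieSpan ℂ L
        (Set.range fun i : Fin n => t i.castSucc (Fin.last n)),
      ⁅∑ p ∈ Finset.univ.filter (fun p : Fin n × Fin n => p.1 < p.2),
          t p.1.castSucc p.2.castSucc, a⁆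
        = ⁅a, ∑ i : Fin n, t i.castSucc (Fin.last n)⁆ := by
  set c' : L := ∑ p ∈ Finset.univ.filter (fun p : Fin n × Fin n => p.1 < p.2),
      t p.1.castSucc p.2.castSucc with hc'
  set S : L := ∑ i : Fin n, t i.castSucc (Fin.last n) with hS
  have hcs : ∀ j : Fin n, (j.castSucc : Fin (n+1)) ≠ Fin.last n :=
    fun j => (Fin.castSucc_lt_last j).ne
  have key : ∀ k : Fin n, ⁅c' + S, t k.castSucc (Fin.last n)⁆ = 0 := by
    intro k
    have hc : ⁅c', t k.castSucc (Fin.last n)⁆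
        = ∑ j ∈ Finset.univ.erase k, ⁅t k.castSucc j.castSucc, t k.castSucc (Fin.last n)⁆ := by
      rw [hc', sum_lie_aux]
      exact pair_sum_aux k (fun i j => ⁅t i.castSucc j.castSucc, t k.castSucc (Fin.last n)⁆)
        (fun i j => by rw [hsymm i.castSucc])
        (fun i j hij hi hj =>
          hcomm _ _ _ _ (by simpa [Fin.castSucc_inj] using hij)
            (hcs k) (by simpa [Fin.castSucc_inj] using hi) (hcs i)
            (by simpa [Fin.castSucc_inj] using hj) (hcs j))
    have hs : ⁅S, t k.castSucc (Fin.last n)⁆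
        = ∑ j ∈ Finset.univ.erase k, ⁅t j.castSucc (Fin.last n), t k.castSucc (Fin.last n)⁆ := by
      rw [hS, sum_lie_aux, ← Finset.add_sum_erase _ _ (Finset.mem_univ k), lie_self, zero_add]
    rw [add_lie, hc, hs, ← Finset.sum_add_distrib]
    refine Finset.sum_eq_zero fun j hj => ?_
    have hjk : j ≠ k := (Finset.mem_erase.mp hj).1
    have hjk' : (j.castSucc : Fin (n+1)) ≠ k.castSucc := by simpa [Fin.castSucc_inj] using hjk
    rw [hsymm k.castSucc j.castSucc, ← add_lie]
    exact hrel j.castSucc k.castSucc (Fin.last n) hjk' (hcs j) (hcs k)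
  let K : LieSubalgebra ℂ L :=
    { carrier := {a : L | ⁅c' + S, a⁆ = 0}
      add_mem' := fun {a b} ha hb => by
        simp only [Set.mem_setOf_eq] at *
        rw [lie_add, ha, hb, add_zero]
      zero_mem' := by simp
      smul_mem' := fun c {a} ha => by
        simp only [Set.mem_setOf_eq] at *
        rw [lie_smul, ha, smul_zero]
      lie_mem' := fun {a b} ha hb => by
        simp only [Set.mem_setOf_eq] at *
        rw [leibniz_lie, ha, hb, lie_zero, zero_lie, add_zero] }
  have hle : LieSubalgebra.lieSpan ℂ L
      (Set.range fun i : Fin n => t i.castSucc (Fin.last n)) ≤ K := by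
    rw [LieSubalgebra.lieSpan_le]
    rintro _ ⟨kk, rfl⟩
    exact key kk
  intro a ha
  have h0 : ⁅c' + S, a⁆ = 0 := hle ha
  rw [add_lie] at h0
  rw [← lie_skew a S]
  exact eq_neg_of_add_eq_zero_left h0
end

section
/- The KZ connection one-form A_KZ = (1/(2πi)) Σ_{i<j} t_{ij} d log(z_i − z_j) on the configuration space of n+1 points in ℂ is flat: dA_KZ + A_KZ ∧ A_KZ = 0. -/
open Finset

/-- The set of ordered pairs `i < j` in `Fin (n+1)`. -/
noncomputable def kzPairs (n : ℕ) : Finset (Fin (n + 1) × Fin (n + 1)) :=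
  Finset.univ.filter fun p => p.1 < p.2

private lemma kz_fderiv {m : ℕ} (c : ℂ) (i j : Fin m) (z u : Fin m → ℂ)
    (h : z i - z j ≠ 0) :
    fderiv ℂ (fun w : Fin m → ℂ => c / (w i - w j)) z u
      = -(c * (u i - u j)) / (z i - z j) ^ 2 := by
  have hproj : HasFDerivAt (fun w : Fin m → ℂ => w i - w j)
      ((ContinuousLinearMap.proj i : (Fin m → ℂ) →L[ℂ] ℂ)
        - ContinuousLinearMap.proj j) z :=
    ((ContinuousLinearMap.proj i : (Fin m → ℂ) →L[ℂ] ℂ).hasFDerivAt).sub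
      ((ContinuousLinearMap.proj j : (Fin m → ℂ) →L[ℂ] ℂ).hasFDerivAt)
  have hinv : HasFDerivAt (fun w : Fin m → ℂ => (w i - w j)⁻¹)
      ((-((z i - z j) ^ 2)⁻¹) • ((ContinuousLinearMap.proj i : (Fin m → ℂ) →L[ℂ] ℂ)
        - ContinuousLinearMap.proj j)) z :=
    (hasDerivAt_inv h).comp_hasFDerivAt z hproj
  have hmain := hinv.const_mul c
  have heq : (fun w : Fin m → ℂ => c / (w i - w j))
      = fun w : Fin m → ℂ => c * (w i - w j)⁻¹ := by
    funext w; rw [div_eq_mul_inv]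
  rw [heq, hmain.fderiv]
  simp only [ContinuousLinearMap.smul_apply, ContinuousLinearMap.sub_apply,
    ContinuousLinearMap.proj_apply, smul_eq_mul]
  field_simp

private lemma kz_arnold (x y A B C D : ℂ) (hx : x ≠ 0) (hy : y ≠ 0) (hxy : x + y ≠ 0) :
    A / x * ((C + D) / (x + y)) - (A + B) / (x + y) * (C / x)
      + B / y * (C / x) - A / x * (D / y)
      + (A + B) / (x + y) * (D / y) - B / y * ((C + D) / (x + y)) = 0 := by
  obtain ⟨s, hsum⟩ : ∃ s, s = x + y := ⟨x + y, rfl⟩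
  rw [← hsum] at hxy ⊢
  have key : A / x * ((C + D) / s) + B / y * (C / x) + (A + B) / s * (D / y)
      = (A + B) / s * (C / x) + A / x * (D / y) + B / y * ((C + D) / s) := by
    field_simp
    subst hsum
    ring
  linear_combination key

private lemma lie_sum' {ι : Type*} {L : Type*} [LieRing L] (s : Finset ι) (f : ι → L) (x : L) :
    ⁅x, ∑ i ∈ s, f i⁆ = ∑ i ∈ s, ⁅x, f i⁆ := by
  induction s using Finset.cons_induction with
  | empty => simp
  | cons a s ha ih => simp [Finset.sum_cons, lie_add, ih]

private lemma sum_lie' {ι : Type*} {L : Type*} [LieRing L] (s : Finset ι) (f : ι → L) (x : L) :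
    ⁅∑ i ∈ s, f i, x⁆ = ∑ i ∈ s, ⁅f i, x⁆ := by
  induction s using Finset.cons_induction with
  | empty => simp
  | cons a s ha ih => simp [Finset.sum_cons, add_lie, ih]

private lemma kz_quad_zero {n : ℕ} {L : Type*} [LieRing L] [LieAlgebra ℂ L]
    (t : Fin (n + 1) → Fin (n + 1) → L)
    (hsymm : ∀ i j, t i j = t j i)
    (hcomm : ∀ i j k l : Fin (n + 1), i ≠ j → k ≠ l → i ≠ k → i ≠ l → j ≠ k → j ≠ l →
      ⁅t i j, t k l⁆ = 0)
    (hrel : ∀ i j k : Fin (n + 1), i ≠ j → i ≠ k → j ≠ k →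
      ⁅t i j + t i k, t j k⁆ = 0)
    (a b : Fin (n + 1) → Fin (n + 1) → ℂ)
    (hasymm : ∀ i j, a i j = a j i) (hbsymm : ∀ i j, b i j = b j i)
    (ha0 : ∀ i, a i i = 0) (hb0 : ∀ i, b i i = 0)
    (harnold : ∀ i j k : Fin (n + 1), i ≠ j → i ≠ k → j ≠ k →
      a i j * b i k - a i k * b i j + a j k * b i j - a i j * b j k
        + a i k * b j k - a j k * b i k = 0) :
    ∑ i : Fin (n + 1), ∑ j : Fin (n + 1), ∑ k : Fin (n + 1), ∑ l : Fin (n + 1),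
      (a i j * b k l) • ⁅t i j, t k l⁆ = 0 := by
  classical
  have hterm : ∀ i j k l : Fin (n + 1), i ≠ j →
      (a i j * b k l) • ⁅t i j, t k l⁆ =
        (if k = i then (a i j * b i l) • ⁅t i j, t i l⁆ else 0)
        + (if k = j then (a i j * b j l) • ⁅t i j, t j l⁆ else 0)
        + (if l = i then (a i j * b k i) • ⁅t i j, t k i⁆ else 0)
        + (if l = j then (a i j * b k j) • ⁅t i j, t k j⁆ else 0) := by
    intro i j k l hij
    have hji : j ≠ i := Ne.symm hij
    by_cases hki : k = i
    · have hkj : ¬ k = j := by rw [hki]; exact hij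
      by_cases hli : l = i
      · have hlj : ¬ l = j := by rw [hli]; exact hij
        simp [hki, hli, hkj, hlj, hb0, hij, hji]
      · by_cases hlj : l = j
        · simp [hki, hlj, hkj, hli, lie_self, hij, hji]
        · simp [hki, hkj, hli, hlj, hij, hji]
    · by_cases hkj : k = j
      · by_cases hli : l = i
        · have hlj : ¬ l = j := by rw [hli]; exact hij
          simp [hkj, hki, hli, hlj, hsymm j i, lie_self, hij, hji]
        · by_cases hlj : l = j
          · simp [hkj, hki, hli, hlj, hb0, hij, hji]
          · simp [hkj, hki, hli, hlj, hij, hji]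
      · by_cases hli : l = i
        · have hlj : ¬ l = j := by rw [hli]; exact hij
          simp [hki, hkj, hli, hlj, hij, hji]
        · by_cases hlj : l = j
          · simp [hki, hkj, hli, hlj, hij, hji]
          · by_cases hkl : k = l
            · subst hkl
              simp [hki, hkj, hli, hlj, hb0, hij, hji]
            · rw [hcomm i j k l hij hkl (Ne.symm hki) (Ne.symm hli) (Ne.symm hkj) (Ne.symm hlj)]
              simp [hki, hkj, hli, hlj, hij, hji]
  have hstep : ∀ i j : Fin (n + 1),
      ∑ k : Fin (n + 1), ∑ l : Fin (n + 1), (a i j * b k l) • ⁅t i j, t k l⁆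
        = ((∑ m : Fin (n + 1), (a i j * b i m) • ⁅t i j, t i m⁆)
            + ∑ m : Fin (n + 1), (a i j * b j m) • ⁅t i j, t j m⁆)
          + ((∑ m : Fin (n + 1), (a i j * b m i) • ⁅t i j, t m i⁆)
            + ∑ m : Fin (n + 1), (a i j * b m j) • ⁅t i j, t m j⁆) := by
    intro i j
    by_cases hij : i = j
    · subst hij
      simp [ha0]
    · calc ∑ k : Fin (n + 1), ∑ l : Fin (n + 1), (a i j * b k l) • ⁅t i j, t k l⁆
          = ∑ k : Fin (n + 1), ∑ l : Fin (n + 1),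
            ((if k = i then (a i j * b i l) • ⁅t i j, t i l⁆ else 0)
              + (if k = j then (a i j * b j l) • ⁅t i j, t j l⁆ else 0)
              + (if l = i then (a i j * b k i) • ⁅t i j, t k i⁆ else 0)
              + (if l = j then (a i j * b k j) • ⁅t i j, t k j⁆ else 0)) :=
            Finset.sum_congr rfl fun k _ => Finset.sum_congr rfl fun l _ => hterm i j k l hij
        _ = _ := by
            simp only [Finset.sum_add_distrib, Finset.sum_ite_irrel, Finset.sum_const_zero,
              Finset.sum_ite_eq', Finset.mem_univ, if_true]
            abel
  -- rewrite the last two groups using symmetry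
  have h34 : ∀ i j : Fin (n + 1),
      (∑ m : Fin (n + 1), (a i j * b m i) • ⁅t i j, t m i⁆)
        = ∑ m : Fin (n + 1), (a i j * b i m) • ⁅t i j, t i m⁆ :=
    fun i j => Finset.sum_congr rfl fun m _ => by rw [hbsymm m i, hsymm m i]
  have h34' : ∀ i j : Fin (n + 1),
      (∑ m : Fin (n + 1), (a i j * b m j) • ⁅t i j, t m j⁆)
        = ∑ m : Fin (n + 1), (a i j * b j m) • ⁅t i j, t j m⁆ :=
    fun i j => Finset.sum_congr rfl fun m _ => by rw [hbsymm m j, hsymm m j]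
  have hTB : (∑ i : Fin (n + 1), ∑ j : Fin (n + 1), ∑ m : Fin (n + 1),
        (a i j * b j m) • ⁅t i j, t j m⁆)
      = ∑ i : Fin (n + 1), ∑ j : Fin (n + 1), ∑ m : Fin (n + 1),
        (a i j * b i m) • ⁅t i j, t i m⁆ := by
    rw [Finset.sum_comm]
    exact Finset.sum_congr rfl fun x _ => Finset.sum_congr rfl fun y _ =>
      Finset.sum_congr rfl fun m _ => by rw [hasymm y x, hsymm y x]
  -- permutation identities
  have hswap12 : ∀ (h : Fin (n + 1) → Fin (n + 1) → Fin (n + 1) → L),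
      (∑ i : Fin (n + 1), ∑ j : Fin (n + 1), ∑ k : Fin (n + 1), h i j k)
        = ∑ i : Fin (n + 1), ∑ j : Fin (n + 1), ∑ k : Fin (n + 1), h j i k :=
    fun h => Finset.sum_comm
  have hswap23 : ∀ (h : Fin (n + 1) → Fin (n + 1) → Fin (n + 1) → L),
      (∑ i : Fin (n + 1), ∑ j : Fin (n + 1), ∑ k : Fin (n + 1), h i j k)
        = ∑ i : Fin (n + 1), ∑ j : Fin (n + 1), ∑ k : Fin (n + 1), h i k j :=
    fun h => Finset.sum_congr rfl fun i _ => Finset.sum_comm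
  have eA : (∑ i : Fin (n + 1), ∑ j : Fin (n + 1), ∑ k : Fin (n + 1),
        (a i j * b i k) • ⁅t i j, t i k⁆)
      = ∑ i : Fin (n + 1), ∑ j : Fin (n + 1), ∑ k : Fin (n + 1),
        (a j i * b j k) • ⁅t j i, t j k⁆ :=
    hswap12 (fun i j k => (a i j * b i k) • ⁅t i j, t i k⁆)
  have eB : (∑ i : Fin (n + 1), ∑ j : Fin (n + 1), ∑ k : Fin (n + 1),
        (a i j * b i k) • ⁅t i j, t i k⁆)
      = ∑ i : Fin (n + 1), ∑ j : Fin (n + 1), ∑ k : Fin (n + 1),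
        (a i k * b i j) • ⁅t i k, t i j⁆ :=
    hswap23 (fun i j k => (a i j * b i k) • ⁅t i j, t i k⁆)
  have eC : (∑ i : Fin (n + 1), ∑ j : Fin (n + 1), ∑ k : Fin (n + 1),
        (a i j * b i k) • ⁅t i j, t i k⁆)
      = ∑ i : Fin (n + 1), ∑ j : Fin (n + 1), ∑ k : Fin (n + 1),
        (a k i * b k j) • ⁅t k i, t k j⁆ :=
    eA.trans (hswap23 (fun i j k => (a j i * b j k) • ⁅t j i, t j k⁆))
  have eD : (∑ i : Fin (n + 1), ∑ j : Fin (n + 1), ∑ k : Fin (n + 1),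
        (a i j * b i k) • ⁅t i j, t i k⁆)
      = ∑ i : Fin (n + 1), ∑ j : Fin (n + 1), ∑ k : Fin (n + 1),
        (a j k * b j i) • ⁅t j k, t j i⁆ :=
    eB.trans (hswap12 (fun i j k => (a i k * b i j) • ⁅t i k, t i j⁆))
  have eE : (∑ i : Fin (n + 1), ∑ j : Fin (n + 1), ∑ k : Fin (n + 1),
        (a i j * b i k) • ⁅t i j, t i k⁆)
      = ∑ i : Fin (n + 1), ∑ j : Fin (n + 1), ∑ k : Fin (n + 1),
        (a k j * b k i) • ⁅t k j, t k i⁆ :=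
    eC.trans (hswap12 (fun i j k => (a k i * b k j) • ⁅t k i, t k j⁆))
  -- the termwise triple identity
  have htriple : ∀ i j k : Fin (n + 1),
      (a i j * b i k) • ⁅t i j, t i k⁆ + (a i k * b i j) • ⁅t i k, t i j⁆
        + (a j k * b j i) • ⁅t j k, t j i⁆ + (a j i * b j k) • ⁅t j i, t j k⁆
        + (a k i * b k j) • ⁅t k i, t k j⁆ + (a k j * b k i) • ⁅t k j, t k i⁆ = 0 := by
    intro i j k
    by_cases hij : i = j
    · subst hij
      simp [ha0, hb0, lie_self]
    · by_cases hik : i = k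
      · subst hik
        simp [ha0, hb0, lie_self]
      · by_cases hjk : j = k
        · subst hjk
          simp [ha0, hb0, lie_self]
        · have h1 : ⁅t j k, t i k⁆ = -⁅t i j, t i k⁆ := by
            have h := hrel j i k (Ne.symm hij) hjk hik
            rw [hsymm j i, add_lie] at h
            exact eq_neg_of_add_eq_zero_right h
          have h2 : ⁅t i j, t j k⁆ = -⁅t i k, t j k⁆ := by
            have h := hrel i j k hij hik hjk
            rw [add_lie] at h
            exact eq_neg_of_add_eq_zero_left h
          have h3 : ⁅t i k, t j k⁆ = ⁅t i j, t i k⁆ := by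
            rw [← lie_skew (t i k) (t j k), h1, neg_neg]
          have hB2 : ⁅t i k, t i j⁆ = -⁅t i j, t i k⁆ := by
            rw [← lie_skew (t i k) (t i j)]
          have hB3 : ⁅t j k, t j i⁆ = ⁅t i j, t i k⁆ := by
            rw [hsymm j i, ← lie_skew (t j k) (t i j), h2, neg_neg, h3]
          have hB4 : ⁅t j i, t j k⁆ = -⁅t i j, t i k⁆ := by
            rw [hsymm j i, h2, h3]
          have hB5 : ⁅t k i, t k j⁆ = ⁅t i j, t i k⁆ := by
            rw [hsymm k i, hsymm k j, h3]
          have hB6 : ⁅t k j, t k i⁆ = -⁅t i j, t i k⁆ := by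
            rw [hsymm k j, hsymm k i, h1]
          rw [hB2, hB3, hB4, hB5, hB6,
            hbsymm j i, hasymm j i, hasymm k i, hbsymm k j, hasymm k j, hbsymm k i]
          have hc := harnold i j k hij hik hjk
          have hcollect :
              (a i j * b i k) • ⁅t i j, t i k⁆ + (a i k * b i j) • -⁅t i j, t i k⁆
                + (a j k * b i j) • ⁅t i j, t i k⁆ + (a i j * b j k) • -⁅t i j, t i k⁆
                + (a i k * b j k) • ⁅t i j, t i k⁆ + (a j k * b i k) • -⁅t i j, t i k⁆
              = (a i j * b i k - a i k * b i j + a j k * b i j - a i j * b j k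
                  + a i k * b j k - a j k * b i k) • ⁅t i j, t i k⁆ := by
            module
          rw [hcollect, hc, zero_smul]
  -- TA = 0
  have hTA0 : (∑ i : Fin (n + 1), ∑ j : Fin (n + 1), ∑ k : Fin (n + 1),
      (a i j * b i k) • ⁅t i j, t i k⁆) = 0 := by
    have h6 : (∑ i : Fin (n + 1), ∑ j : Fin (n + 1), ∑ k : Fin (n + 1),
          (a i j * b i k) • ⁅t i j, t i k⁆)
        + (∑ i : Fin (n + 1), ∑ j : Fin (n + 1), ∑ k : Fin (n + 1),
          (a i j * b i k) • ⁅t i j, t i k⁆)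
        + (∑ i : Fin (n + 1), ∑ j : Fin (n + 1), ∑ k : Fin (n + 1),
          (a i j * b i k) • ⁅t i j, t i k⁆)
        + (∑ i : Fin (n + 1), ∑ j : Fin (n + 1), ∑ k : Fin (n + 1),
          (a i j * b i k) • ⁅t i j, t i k⁆)
        + (∑ i : Fin (n + 1), ∑ j : Fin (n + 1), ∑ k : Fin (n + 1),
          (a i j * b i k) • ⁅t i j, t i k⁆)
        + (∑ i : Fin (n + 1), ∑ j : Fin (n + 1), ∑ k : Fin (n + 1),
          (a i j * b i k) • ⁅t i j, t i k⁆) = 0 := by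
      nth_rewrite 6 [eE]
      nth_rewrite 5 [eC]
      nth_rewrite 4 [eA]
      nth_rewrite 3 [eD]
      nth_rewrite 2 [eB]
      simp only [← Finset.sum_add_distrib]
      exact Finset.sum_eq_zero fun i _ => Finset.sum_eq_zero fun j _ =>
        Finset.sum_eq_zero fun k _ => htriple i j k
    have h6' : (6 : ℂ) • (∑ i : Fin (n + 1), ∑ j : Fin (n + 1), ∑ k : Fin (n + 1),
        (a i j * b i k) • ⁅t i j, t i k⁆) = 0 := by
      rw [show (6 : ℂ) = 1 + 1 + 1 + 1 + 1 + 1 by norm_num]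
      simp only [add_smul, one_smul]
      exact h6
    calc (∑ i : Fin (n + 1), ∑ j : Fin (n + 1), ∑ k : Fin (n + 1),
          (a i j * b i k) • ⁅t i j, t i k⁆)
        = (6 : ℂ)⁻¹ • ((6 : ℂ) • ∑ i : Fin (n + 1), ∑ j : Fin (n + 1), ∑ k : Fin (n + 1),
          (a i j * b i k) • ⁅t i j, t i k⁆) := by
          rw [smul_smul, show (6 : ℂ)⁻¹ * 6 = 1 by norm_num, one_smul]
      _ = 0 := by rw [h6', smul_zero]
  -- assemble
  calc ∑ i : Fin (n + 1), ∑ j : Fin (n + 1), ∑ k : Fin (n + 1), ∑ l : Fin (n + 1),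
        (a i j * b k l) • ⁅t i j, t k l⁆
      = ∑ i : Fin (n + 1), ∑ j : Fin (n + 1),
          (((∑ m : Fin (n + 1), (a i j * b i m) • ⁅t i j, t i m⁆)
            + ∑ m : Fin (n + 1), (a i j * b j m) • ⁅t i j, t j m⁆)
          + ((∑ m : Fin (n + 1), (a i j * b i m) • ⁅t i j, t i m⁆)
            + ∑ m : Fin (n + 1), (a i j * b j m) • ⁅t i j, t j m⁆)) := by
        refine Finset.sum_congr rfl fun i _ => Finset.sum_congr rfl fun j _ => ?_
        rw [hstep i j, h34 i j, h34' i j]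
    _ = 0 := by
        simp only [Finset.sum_add_distrib]
        rw [hTB, hTA0]
        simp

private lemma kz_double {n : ℕ} {L : Type*} [LieRing L] [LieAlgebra ℂ L]
    (t : Fin (n + 1) → Fin (n + 1) → L)
    (hsymm : ∀ i j, t i j = t j i)
    (c : Fin (n + 1) → Fin (n + 1) → ℂ)
    (hcs : ∀ i j, c i j = c j i) (hc0 : ∀ i, c i i = 0) :
    (∑ i : Fin (n + 1), ∑ j : Fin (n + 1), c i j • t i j)
      = (2 : ℂ) • ∑ p ∈ kzPairs n, c p.1 p.2 • t p.1 p.2 := by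
  classical
  have h1 : (∑ i : Fin (n + 1), ∑ j : Fin (n + 1), c i j • t i j)
      = ∑ p : Fin (n + 1) × Fin (n + 1), c p.1 p.2 • t p.1 p.2 := by
    rw [← Finset.sum_product', Finset.univ_product_univ]
  rw [h1, ← Finset.sum_filter_add_sum_filter_not Finset.univ
    (fun p : Fin (n + 1) × Fin (n + 1) => p.1 < p.2)]
  have h2 : (∑ p ∈ Finset.univ.filter
        (fun p : Fin (n + 1) × Fin (n + 1) => ¬ p.1 < p.2), c p.1 p.2 • t p.1 p.2)
      = ∑ p ∈ kzPairs n, c p.1 p.2 • t p.1 p.2 := by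
    have hsub : (Finset.univ.filter fun p : Fin (n + 1) × Fin (n + 1) => p.2 < p.1)
        ⊆ Finset.univ.filter fun p => ¬ p.1 < p.2 := by
      intro p hp
      simp only [Finset.mem_filter, Finset.mem_univ, true_and] at hp ⊢
      exact fun h => lt_asymm hp h
    have hz : ∀ p ∈ Finset.univ.filter (fun p : Fin (n + 1) × Fin (n + 1) => ¬ p.1 < p.2),
        p ∉ Finset.univ.filter (fun p : Fin (n + 1) × Fin (n + 1) => p.2 < p.1) →
        c p.1 p.2 • t p.1 p.2 = 0 := by
      intro p hp hnp
      simp only [Finset.mem_filter, Finset.mem_univ, true_and] at hp hnp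
      have : p.1 = p.2 := le_antisymm (not_lt.mp hnp) (not_lt.mp hp)
      rw [← this, hc0, zero_smul]
    rw [← Finset.sum_subset hsub hz]
    refine Finset.sum_nbij' Prod.swap Prod.swap ?_ ?_ ?_ ?_ ?_
    · intro p hp
      simp only [Finset.mem_filter, Finset.mem_univ, true_and, kzPairs] at hp ⊢
      exact hp
    · intro p hp
      simp only [Finset.mem_filter, Finset.mem_univ, true_and, kzPairs] at hp ⊢
      exact hp
    · intro p _; rfl
    · intro p _; rfl
    · intro p _
      simp only [Prod.snd_swap, Prod.fst_swap]
      rw [hcs p.1 p.2, hsymm p.1 p.2]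
  rw [h2, two_smul]
  simp only [kzPairs]

private lemma kz_bracket_zero {n : ℕ} {L : Type*} [LieRing L] [LieAlgebra ℂ L]
    (t : Fin (n + 1) → Fin (n + 1) → L)
    (hsymm : ∀ i j, t i j = t j i)
    (hcomm : ∀ i j k l : Fin (n + 1), i ≠ j → k ≠ l → i ≠ k → i ≠ l → j ≠ k → j ≠ l →
      ⁅t i j, t k l⁆ = 0)
    (hrel : ∀ i j k : Fin (n + 1), i ≠ j → i ≠ k → j ≠ k →
      ⁅t i j + t i k, t j k⁆ = 0)
    (a b : Fin (n + 1) → Fin (n + 1) → ℂ)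
    (hasymm : ∀ i j, a i j = a j i) (hbsymm : ∀ i j, b i j = b j i)
    (ha0 : ∀ i, a i i = 0) (hb0 : ∀ i, b i i = 0)
    (harnold : ∀ i j k : Fin (n + 1), i ≠ j → i ≠ k → j ≠ k →
      a i j * b i k - a i k * b i j + a j k * b i j - a i j * b j k
        + a i k * b j k - a j k * b i k = 0) :
    ⁅∑ p ∈ kzPairs n, a p.1 p.2 • t p.1 p.2, ∑ p ∈ kzPairs n, b p.1 p.2 • t p.1 p.2⁆ = 0 := by
  have hexp : ⁅∑ i : Fin (n + 1), ∑ j : Fin (n + 1), a i j • t i j,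
        ∑ i : Fin (n + 1), ∑ j : Fin (n + 1), b i j • t i j⁆
      = ∑ i : Fin (n + 1), ∑ j : Fin (n + 1), ∑ k : Fin (n + 1), ∑ l : Fin (n + 1),
        (a i j * b k l) • ⁅t i j, t k l⁆ := by
    rw [sum_lie']
    refine Finset.sum_congr rfl fun i _ => ?_
    rw [sum_lie']
    refine Finset.sum_congr rfl fun j _ => ?_
    rw [lie_sum']
    refine Finset.sum_congr rfl fun k _ => ?_
    rw [lie_sum']
    refine Finset.sum_congr rfl fun l _ => ?_
    rw [smul_lie, lie_smul, smul_smul]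
  have h4 : (4 : ℂ) • ⁅∑ p ∈ kzPairs n, a p.1 p.2 • t p.1 p.2,
      ∑ p ∈ kzPairs n, b p.1 p.2 • t p.1 p.2⁆ = 0 := by
    calc (4 : ℂ) • ⁅∑ p ∈ kzPairs n, a p.1 p.2 • t p.1 p.2,
          ∑ p ∈ kzPairs n, b p.1 p.2 • t p.1 p.2⁆
        = ⁅(2 : ℂ) • ∑ p ∈ kzPairs n, a p.1 p.2 • t p.1 p.2,
            (2 : ℂ) • ∑ p ∈ kzPairs n, b p.1 p.2 • t p.1 p.2⁆ := by
          rw [smul_lie, lie_smul, smul_smul, show (2 : ℂ) * 2 = 4 by norm_num]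
      _ = ⁅∑ i : Fin (n + 1), ∑ j : Fin (n + 1), a i j • t i j,
            ∑ i : Fin (n + 1), ∑ j : Fin (n + 1), b i j • t i j⁆ := by
          rw [kz_double t hsymm a hasymm ha0, kz_double t hsymm b hbsymm hb0]
      _ = ∑ i : Fin (n + 1), ∑ j : Fin (n + 1), ∑ k : Fin (n + 1), ∑ l : Fin (n + 1),
            (a i j * b k l) • ⁅t i j, t k l⁆ := hexp
      _ = 0 := kz_quad_zero t hsymm hcomm hrel a b hasymm hbsymm ha0 hb0 harnold
  calc ⁅∑ p ∈ kzPairs n, a p.1 p.2 • t p.1 p.2, ∑ p ∈ kzPairs n, b p.1 p.2 • t p.1 p.2⁆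
      = (4 : ℂ)⁻¹ • ((4 : ℂ) • ⁅∑ p ∈ kzPairs n, a p.1 p.2 • t p.1 p.2,
          ∑ p ∈ kzPairs n, b p.1 p.2 • t p.1 p.2⁆) := by
        rw [smul_smul, show (4 : ℂ)⁻¹ * 4 = 1 by norm_num, one_smul]
    _ = 0 := by rw [h4, smul_zero]

/-- The KZ connection one-form `A_KZ = (1/(2πi)) ∑_{i<j} t_{ij} d log (z_i - z_j)` on the
configuration space of `n+1` points in `ℂ` is flat: `dA_KZ + A_KZ ∧ A_KZ = 0`.
The curvature 2-form is evaluated at a configuration `z` (pairwise distinct points)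
on a pair of tangent vectors `u, v`: the first summand is `dA_KZ(u,v)` (computed via
`fderiv` of the coefficient functions of the `d log` forms), the second is
`⁅A_KZ(u), A_KZ(v)⁆ = (A_KZ ∧ A_KZ)(u,v)`. -/
theorem kz_connection_flat (n : ℕ) (L : Type*) [LieRing L] [LieAlgebra ℂ L]
    (t : Fin (n + 1) → Fin (n + 1) → L)
    (hsymm : ∀ i j, t i j = t j i)
    (hcomm : ∀ i j k l : Fin (n + 1), i ≠ j → k ≠ l → i ≠ k → i ≠ l → j ≠ k → j ≠ l →
      ⁅t i j, t k l⁆ = 0)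
    (hrel : ∀ i j k : Fin (n + 1), i ≠ j → i ≠ k → j ≠ k →
      ⁅t i j + t i k, t j k⁆ = 0)
    (z : Fin (n + 1) → ℂ) (hz : Function.Injective z) (u v : Fin (n + 1) → ℂ) :
    ((2 * (Real.pi : ℂ) * Complex.I)⁻¹ •
        ∑ p ∈ kzPairs n,
          (fderiv ℂ (fun w : Fin (n + 1) → ℂ => (v p.1 - v p.2) / (w p.1 - w p.2)) z u
            - fderiv ℂ (fun w : Fin (n + 1) → ℂ => (u p.1 - u p.2) / (w p.1 - w p.2)) z v)
            • t p.1 p.2)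
      + ⁅(2 * (Real.pi : ℂ) * Complex.I)⁻¹ •
            ∑ p ∈ kzPairs n, ((u p.1 - u p.2) / (z p.1 - z p.2)) • t p.1 p.2,
          (2 * (Real.pi : ℂ) * Complex.I)⁻¹ •
            ∑ p ∈ kzPairs n, ((v p.1 - v p.2) / (z p.1 - z p.2)) • t p.1 p.2⁆ = 0 := by
  have hzsub : ∀ {i j : Fin (n + 1)}, i ≠ j → z i - z j ≠ 0 := fun {i j} hij =>
    sub_ne_zero.mpr fun h => hij (hz h)
  -- the dA part vanishes termwise
  have h1 : (∑ p ∈ kzPairs n,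
      (fderiv ℂ (fun w : Fin (n + 1) → ℂ => (v p.1 - v p.2) / (w p.1 - w p.2)) z u
        - fderiv ℂ (fun w : Fin (n + 1) → ℂ => (u p.1 - u p.2) / (w p.1 - w p.2)) z v)
        • t p.1 p.2) = 0 := by
    refine Finset.sum_eq_zero fun p hp => ?_
    have hne : p.1 ≠ p.2 := by
      have := (Finset.mem_filter.mp hp).2
      exact ne_of_lt this
    rw [kz_fderiv _ _ _ _ _ (hzsub hne), kz_fderiv _ _ _ _ _ (hzsub hne)]
    have : -((v p.1 - v p.2) * (u p.1 - u p.2)) / (z p.1 - z p.2) ^ 2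
        - -((u p.1 - u p.2) * (v p.1 - v p.2)) / (z p.1 - z p.2) ^ 2 = 0 := by ring
    rw [this, zero_smul]
  rw [h1, smul_zero, zero_add]
  -- the bracket part
  have hb : ⁅∑ p ∈ kzPairs n, ((u p.1 - u p.2) / (z p.1 - z p.2)) • t p.1 p.2,
      ∑ p ∈ kzPairs n, ((v p.1 - v p.2) / (z p.1 - z p.2)) • t p.1 p.2⁆ = 0 := by
    refine kz_bracket_zero t hsymm hcomm hrel
      (fun i j => (u i - u j) / (z i - z j)) (fun i j => (v i - v j) / (z i - z j))
      ?_ ?_ ?_ ?_ ?_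
    · intro i j
      show (u i - u j) / (z i - z j) = (u j - u i) / (z j - z i)
      rw [show u i - u j = -(u j - u i) by ring, show z i - z j = -(z j - z i) by ring,
        neg_div_neg_eq]
    · intro i j
      show (v i - v j) / (z i - z j) = (v j - v i) / (z j - z i)
      rw [show v i - v j = -(v j - v i) by ring, show z i - z j = -(z j - z i) by ring,
        neg_div_neg_eq]
    · intro i
      show (u i - u i) / (z i - z i) = 0
      simp
    · intro i
      show (v i - v i) / (z i - z i) = 0
      simp
    · intro i j k hij hik hjk
      have hx : z i - z j ≠ 0 := hzsub hij
      have hy : z j - z k ≠ 0 := hzsub hjk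
      have hxy : z i - z k ≠ 0 := hzsub hik
      have e1 : z i - z k = (z i - z j) + (z j - z k) := by ring
      have e2 : u i - u k = (u i - u j) + (u j - u k) := by ring
      have e3 : v i - v k = (v i - v j) + (v j - v k) := by ring
      show (u i - u j) / (z i - z j) * ((v i - v k) / (z i - z k))
          - (u i - u k) / (z i - z k) * ((v i - v j) / (z i - z j))
          + (u j - u k) / (z j - z k) * ((v i - v j) / (z i - z j))
          - (u i - u j) / (z i - z j) * ((v j - v k) / (z j - z k))
          + (u i - u k) / (z i - z k) * ((v j - v k) / (z j - z k))
          - (u j - u k) / (z j - z k) * ((v i - v k) / (z i - z k)) = 0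
      rw [e1, e2, e3]
      exact kz_arnold (z i - z j) (z j - z k) (u i - u j) (u j - u k)
        (v i - v j) (v j - v k) hx hy (e1 ▸ hxy)
  rw [smul_lie, lie_smul, hb, smul_zero, smul_zero]
end

section
/- The Arnold identity holds: for pairwise distinct complex variables z_i, z_j, z_k, one has d log(z_i−z_j) ∧ d log(z_j−z_k) + d log(z_j−z_k) ∧ d log(z_k−z_i) + d log(z_k−z_i) ∧ d log(z_i−z_j) = 0 as a 2-form on the configuration space. -/
/-- The 1-form `d log (z_a - z_b)` on the configuration space of 3 points in `ℂ`,
evaluated at the configuration `z` on the tangent vector `w`. -/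
noncomputable def dlog (z : Fin 3 → ℂ) (a b : Fin 3) (w : Fin 3 → ℂ) : ℂ :=
  (w a - w b) / (z a - z b)

/-- The wedge product of two 1-forms evaluated on tangent vectors `u, v`. -/
noncomputable def wedge (α β : (Fin 3 → ℂ) → ℂ) (u v : Fin 3 → ℂ) : ℂ :=
  α u * β v - α v * β u

/-- The Arnold identity: for pairwise distinct `z_i, z_j, z_k` (here `i,j,k = 0,1,2`),
`d log(z_i−z_j) ∧ d log(z_j−z_k) + d log(z_j−z_k) ∧ d log(z_k−z_i)
  + d log(z_k−z_i) ∧ d log(z_i−z_j) = 0` as a 2-form on the configuration space. -/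
theorem arnold_identity (z : Fin 3 → ℂ) (hz : Function.Injective z) (u v : Fin 3 → ℂ) :
    wedge (dlog z 0 1) (dlog z 1 2) u v
      + wedge (dlog z 1 2) (dlog z 2 0) u v
      + wedge (dlog z 2 0) (dlog z 0 1) u v = 0 := by
  have h01 : z 0 - z 1 ≠ 0 := sub_ne_zero.mpr (fun h => by simpa using hz h)
  have h12 : z 1 - z 2 ≠ 0 := sub_ne_zero.mpr (fun h => by simpa using hz h)
  have h20 : z 2 - z 0 ≠ 0 := sub_ne_zero.mpr (fun h => by simpa using hz h)
  simp only [wedge, dlog]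
  field_simp
  ring
end

section
/- Let {−,−} be the Kirillov-Kostant-Souriau double bracket on the tensor algebra T(H₁) over generators a_1,…,a_n, determined by {a_i, a_j} = δ_{ij}(1⊗a_i − a_i⊗1). Then for the 1-forms A(z) = (1/(2πi)) Σ_i a_i d log(z−z_i) and A(w), one has {A(z), A(w)} = (1/(2πi)) (1 ∧ (A(z)−A(w))) d log(z−w), where 1 ∧ x denotes 1⊗x − x⊗1. -/
open TensorProduct

/-- The constant `1/(2πi)`. -/
noncomputable def c2πi : ℂ := (2 * (Real.pi : ℂ) * Complex.I)⁻¹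

/-- Let `{−,−}` (here `db`) be the KKS double bracket on the tensor algebra
`T(H₁) = ℂ⟨a_1,…,a_n⟩`, with `{a_i,a_j} = δ_{ij}(1⊗a_i − a_i⊗1)`. Then for the 1-forms
`A(z) = (1/2πi) ∑_i a_i d log(z−z_i)` and `A(w)` one has
`{A(z), A(w)} = (1/2πi)(1 ∧ (A(z)−A(w))) d log(z−w)` where `1 ∧ x = 1⊗x − x⊗1`.
Both sides are 2-forms on `(ℂ∖{z_1,…,z_n})² ∖ diagonal` (coordinates `z, w`), valued in
`T(H₁)⊗T(H₁)`, evaluated on tangent vectors `u, v ∈ ℂ²` (`u 0` the `dz`-component,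
`u 1` the `dw`-component), with products of 1-forms interpreted as wedge products. -/
theorem kks_double_bracket_of_forms (n : ℕ) (zs : Fin n → ℂ) (hzs : Function.Injective zs)
    (db : FreeAlgebra ℂ (Fin n) →ₗ[ℂ] FreeAlgebra ℂ (Fin n) →ₗ[ℂ]
      TensorProduct ℂ (FreeAlgebra ℂ (Fin n)) (FreeAlgebra ℂ (Fin n)))
    (hdb : ∀ i j, db (FreeAlgebra.ι ℂ i) (FreeAlgebra.ι ℂ j) =
      if i = j then
        (1 : FreeAlgebra ℂ (Fin n)) ⊗ₜ[ℂ] FreeAlgebra.ι ℂ i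
          - FreeAlgebra.ι ℂ i ⊗ₜ[ℂ] (1 : FreeAlgebra ℂ (Fin n))
      else 0)
    (z w : ℂ) (hzw : z ≠ w) (hz : ∀ i, z ≠ zs i) (hw : ∀ i, w ≠ zs i)
    (u v : Fin 2 → ℂ) :
    ∑ i : Fin n, ∑ j : Fin n,
      ((c2πi * (u 0 / (z - zs i))) * (c2πi * (v 1 / (w - zs j)))
          - (c2πi * (v 0 / (z - zs i))) * (c2πi * (u 1 / (w - zs j))))
        • db (FreeAlgebra.ι ℂ i) (FreeAlgebra.ι ℂ j)
    = c2πi • ∑ i : Fin n,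
        ((c2πi * (u 0 / (z - zs i)) - c2πi * (u 1 / (w - zs i))) * ((v 0 - v 1) / (z - w))
            - (c2πi * (v 0 / (z - zs i)) - c2πi * (v 1 / (w - zs i))) * ((u 0 - u 1) / (z - w)))
          • ((1 : FreeAlgebra ℂ (Fin n)) ⊗ₜ[ℂ] FreeAlgebra.ι ℂ i
              - FreeAlgebra.ι ℂ i ⊗ₜ[ℂ] (1 : FreeAlgebra ℂ (Fin n))) := by
  rw [Finset.smul_sum]
  refine Finset.sum_congr rfl fun i _ => ?_
  rw [Finset.sum_eq_single i]
  · rw [hdb, if_pos rfl, smul_smul]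
    congr 1
    have hzi : z - zs i ≠ 0 := sub_ne_zero.mpr (hz i)
    have hwi : w - zs i ≠ 0 := sub_ne_zero.mpr (hw i)
    have hzw' : z - w ≠ 0 := sub_ne_zero.mpr hzw
    field_simp
    ring
  · intro j _ hj
    rw [hdb, if_neg fun h => hj h.symm, smul_zero]
  · intro h
    exact absurd (Finset.mem_univ i) h
end
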